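/- arXiv:1904.07457 — 4 statements merged into one kernel-verified Lean document; each statement's English description precedes it below -/
import Mathlib

section
/- Let (s_k)_{k≥1} be i.i.d. random variables taking values in a measurable space S, let (g_k)_{k≥1} be i.i.d. standard Gaussian real random variables independent of (s_k), let h_1, …, h_m : S → ℝ be bounded measurable functions, and let c_1, …, c_m ∈ ℝ. Then (1/√H) Σ_{k=1}^H g_k · (Σ_{i=1}^m c_i h_i(s_k)) converges in distribution, as H → ∞, to a Gaussian distribution with mean 0 and variance Σ_{i=1}^m Σ_{j=1}^m c_i c_j E[h_i(s_1) h_j(s_1)]. (This gives convergence of every finite linear combination of the network outputs at positions t_1, …, t_m to the corresponding Gaussian, the finite-dimensional Gaussian-process limit.) -/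
open MeasureTheory ProbabilityTheory Filter Topology Matrix ENNReal NNReal

namespace RFAux

lemma map_equiv_withDensity {α β : Type*} [MeasurableSpace α] [MeasurableSpace β]
    (e : α ≃ᵐ β) (μ : Measure α) {g : β → ℝ≥0∞} (hg : Measurable g) :
    Measure.map e (μ.withDensity (g ∘ e)) = (Measure.map e μ).withDensity g := by
  ext s hs
  rw [Measure.map_apply e.measurable hs, withDensity_apply _ hs,
    withDensity_apply _ (e.measurable hs), setLIntegral_map hs hg e.measurable]
  rfl

lemma gauss_prod_density :
    (gaussianReal 0 1).prod (gaussianReal 0 1)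
      = ((volume : Measure ℝ).prod volume).withDensity
          (fun p => gaussianPDF 0 1 p.1 * gaussianPDF 0 1 p.2) := by
  have h1 : gaussianReal 0 1 = (volume : Measure ℝ).withDensity (gaussianPDF 0 1) :=
    gaussianReal_of_var_ne_zero 0 one_ne_zero
  refine Measure.prod_eq fun s t hs ht => ?_
  rw [withDensity_apply _ (hs.prod ht), ← Measure.prod_restrict]
  have hm : Measurable fun z : ℝ × ℝ => gaussianPDF 0 1 z.1 * gaussianPDF 0 1 z.2 :=
    ((measurable_gaussianPDF 0 1).comp measurable_fst).mul
      ((measurable_gaussianPDF 0 1).comp measurable_snd)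
  rw [MeasureTheory.lintegral_prod _ hm.aemeasurable]
  calc ∫⁻ x, ∫⁻ y, gaussianPDF 0 1 x * gaussianPDF 0 1 y ∂(volume.restrict t)
        ∂(volume.restrict s)
      = ∫⁻ x, gaussianPDF 0 1 x * ∫⁻ y, gaussianPDF 0 1 y ∂(volume.restrict t)
        ∂(volume.restrict s) := by
        refine lintegral_congr fun x => ?_
        exact lintegral_const_mul _ (measurable_gaussianPDF 0 1)
    _ = (∫⁻ x, gaussianPDF 0 1 x ∂(volume.restrict s))
        * ∫⁻ y, gaussianPDF 0 1 y ∂(volume.restrict t) :=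
        lintegral_mul_const _ (measurable_gaussianPDF 0 1)
    _ = gaussianReal 0 1 s * gaussianReal 0 1 t := by
        rw [h1, withDensity_apply _ hs, withDensity_apply _ ht]


/-- Rotation of the plane as a measurable equivalence. -/
def rotEquiv (a b : ℝ) (hab : a ^ 2 + b ^ 2 = 1) : (ℝ × ℝ) ≃ᵐ (ℝ × ℝ) where
  toFun := fun p => (a * p.1 + b * p.2, -b * p.1 + a * p.2)
  invFun := fun p => (a * p.1 - b * p.2, b * p.1 + a * p.2)
  left_inv := fun p => by
    obtain ⟨x, y⟩ := p
    simp only [Prod.mk.injEq]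
    constructor
    · linear_combination x * hab
    · linear_combination y * hab
  right_inv := fun p => by
    obtain ⟨x, y⟩ := p
    simp only [Prod.mk.injEq]
    constructor
    · linear_combination x * hab
    · linear_combination y * hab
  measurable_toFun :=
    ((measurable_fst.const_mul a).add (measurable_snd.const_mul b)).prodMk
      ((measurable_fst.const_mul (-b)).add (measurable_snd.const_mul a))
  measurable_invFun :=
    ((measurable_fst.const_mul a).sub (measurable_snd.const_mul b)).prodMk
      ((measurable_fst.const_mul b).add (measurable_snd.const_mul a))

lemma rot_volume (a b : ℝ) (hab : a ^ 2 + b ^ 2 = 1) :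
    Measure.map (⇑(rotEquiv a b hab)) ((volume : Measure ℝ).prod volume)
      = (volume : Measure ℝ).prod volume := by
  have M : Matrix (Fin 2) (Fin 2) ℝ := !![a, b; -b, a]
  set M : Matrix (Fin 2) (Fin 2) ℝ := !![a, b; -b, a] with hM
  have hdet : M.det = 1 := by
    rw [hM, Matrix.det_fin_two_of]
    linear_combination hab
  have hMlin : Measurable (Matrix.toLin' M) := by
    exact (LinearMap.continuous_on_pi _).measurable
  have mpM : MeasurePreserving (Matrix.toLin' M)
      (volume : Measure (Fin 2 → ℝ)) volume := by
    refine ⟨hMlin, ?_⟩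
    rw [Real.map_matrix_volume_pi_eq_smul_volume_pi (by rw [hdet]; exact one_ne_zero)]
    simp [hdet]
  have mpe := volume_preserving_finTwoArrow ℝ
  have key := (mpe.comp (mpM.comp (mpe.symm MeasurableEquiv.finTwoArrow)))
  have hfun : (MeasurableEquiv.finTwoArrow ∘ (Matrix.toLin' M) ∘
      (MeasurableEquiv.finTwoArrow).symm) = ⇑(rotEquiv a b hab) := by
    funext p
    simp only [Function.comp_apply, MeasurableEquiv.finTwoArrow_symm_apply,
      Matrix.toLin'_apply, MeasurableEquiv.finTwoArrow_apply, rotEquiv,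
      MeasurableEquiv.coe_mk, Equiv.coe_fn_mk]
    rw [hM]
    simp [Matrix.mulVec, dotProduct, Fin.sum_univ_two]
  have := key.map_eq
  rw [hfun] at this
  rwa [← MeasureTheory.Measure.volume_eq_prod]


lemma pdf_two_rot (a b : ℝ) (hab : a ^ 2 + b ^ 2 = 1) (x y : ℝ) :
    gaussianPDFReal 0 1 (a * x + b * y) * gaussianPDFReal 0 1 (-b * x + a * y)
      = gaussianPDFReal 0 1 x * gaussianPDFReal 0 1 y := by
  have hsum : (a * x + b * y) ^ 2 + (-b * x + a * y) ^ 2 = x ^ 2 + y ^ 2 := by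
    linear_combination (x ^ 2 + y ^ 2) * hab
  simp only [gaussianPDFReal, sub_zero, NNReal.coe_one, mul_one]
  rw [mul_mul_mul_comm, ← Real.exp_add, mul_mul_mul_comm, ← Real.exp_add]
  congr 1
  rw [← add_div, ← add_div]
  congr 1
  linarith [hsum]

lemma rot_gauss (a b : ℝ) (hab : a ^ 2 + b ^ 2 = 1) :
    Measure.map (⇑(rotEquiv a b hab)) ((gaussianReal 0 1).prod (gaussianReal 0 1))
      = (gaussianReal 0 1).prod (gaussianReal 0 1) := by
  set ρ : ℝ × ℝ → ℝ≥0∞ := fun p => gaussianPDF 0 1 p.1 * gaussianPDF 0 1 p.2 with hρdef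
  have hρm : Measurable ρ :=
    ((measurable_gaussianPDF 0 1).comp measurable_fst).mul
      ((measurable_gaussianPDF 0 1).comp measurable_snd)
  have hinv : ρ ∘ ⇑(rotEquiv a b hab) = ρ := by
    funext p
    obtain ⟨x, y⟩ := p
    simp only [Function.comp_apply, rotEquiv, MeasurableEquiv.coe_mk, Equiv.coe_fn_mk, hρdef,
      gaussianPDF]
    rw [← ENNReal.ofReal_mul (gaussianPDFReal_nonneg _ _ _),
      ← ENNReal.ofReal_mul (gaussianPDFReal_nonneg _ _ _)]
    rw [pdf_two_rot a b hab x y]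
  calc Measure.map (⇑(rotEquiv a b hab)) ((gaussianReal 0 1).prod (gaussianReal 0 1))
      = Measure.map (⇑(rotEquiv a b hab))
          ((((volume : Measure ℝ).prod volume)).withDensity (ρ ∘ ⇑(rotEquiv a b hab))) := by
        rw [hinv, ← gauss_prod_density]
    _ = (Measure.map (⇑(rotEquiv a b hab)) (((volume : Measure ℝ).prod volume))).withDensity ρ :=
        map_equiv_withDensity (rotEquiv a b hab) _ hρm
    _ = (gaussianReal 0 1).prod (gaussianReal 0 1) := by
        rw [rot_volume a b hab, ← gauss_prod_density]

lemma map_lin_gauss_prod (r s : ℝ) :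
    Measure.map (fun p : ℝ × ℝ => r * p.1 + s * p.2)
        ((gaussianReal 0 1).prod (gaussianReal 0 1))
      = gaussianReal 0 (r ^ 2 + s ^ 2).toNNReal := by
  by_cases hrs : r ^ 2 + s ^ 2 = 0
  · have hr : r = 0 := by nlinarith [sq_nonneg r, sq_nonneg s]
    have hs : s = 0 := by nlinarith [sq_nonneg r, sq_nonneg s]
    subst hr; subst hs
    simp only [zero_mul, add_zero, zero_pow, ne_eq, OfNat.ofNat_ne_zero, not_false_eq_true,
      Real.toNNReal_zero, gaussianReal_zero_var]
    rw [Measure.map_const]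
    simp
  · set ρ0 : ℝ := Real.sqrt (r ^ 2 + s ^ 2) with hρ0
    have hnn : (0:ℝ) ≤ r ^ 2 + s ^ 2 := by positivity
    have hρpos : 0 < ρ0 := Real.sqrt_pos.mpr (lt_of_le_of_ne hnn (Ne.symm hrs))
    have hρsq : ρ0 ^ 2 = r ^ 2 + s ^ 2 := Real.sq_sqrt hnn
    set a : ℝ := r / ρ0 with ha
    set b : ℝ := s / ρ0 with hb
    have hab : a ^ 2 + b ^ 2 = 1 := by
      rw [ha, hb, div_pow, div_pow, ← add_div, ← hρsq, div_self (by positivity)]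
    have hfun : (fun p : ℝ × ℝ => r * p.1 + s * p.2)
        = (fun x : ℝ => ρ0 * x) ∘ Prod.fst ∘ ⇑(rotEquiv a b hab) := by
      funext p
      simp only [Function.comp_apply, rotEquiv, MeasurableEquiv.coe_mk, Equiv.coe_fn_mk, ha, hb]
      field_simp
    rw [hfun, ← Function.comp_assoc]
    rw [← Measure.map_map ((measurable_id'.const_mul ρ0).comp measurable_fst)
      (rotEquiv a b hab).measurable, rot_gauss a b hab]
    rw [← Measure.map_map (measurable_id'.const_mul ρ0) measurable_fst]
    rw [Measure.map_fst_prod]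
    simp only [measure_univ, one_smul]
    rw [show (fun x : ℝ => ρ0 * x) = (fun x : ℝ => ρ0 * x) from rfl,
      gaussianReal_map_const_mul ρ0]
    congr 1
    · exact mul_zero _
    · ext
      simp only [NNReal.coe_mul, NNReal.coe_mk, NNReal.coe_one, mul_one]
      rw [hρsq, Real.coe_toNNReal _ hnn]


lemma gauss_eq_map_sqrt (v : ℝ≥0) :
    gaussianReal 0 v = (gaussianReal 0 1).map (fun x : ℝ => Real.sqrt v * x) := by
  rw [gaussianReal_map_const_mul (Real.sqrt v)]
  congr 1
  · exact (mul_zero _).symm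
  · ext
    simp only [NNReal.coe_mul, NNReal.coe_mk, NNReal.coe_one, mul_one]
    exact (Real.sq_sqrt v.coe_nonneg).symm

lemma gauss_add {Ω : Type*} [MeasurableSpace Ω] {μ : Measure Ω} [IsProbabilityMeasure μ]
    {X Y : Ω → ℝ} (hX : Measurable X) (hY : Measurable Y) (hXY : IndepFun X Y μ)
    {v w : ℝ≥0} (hvX : μ.map X = gaussianReal 0 v) (hwY : μ.map Y = gaussianReal 0 w) :
    μ.map (fun ω => X ω + Y ω) = gaussianReal 0 (v + w) := by
  have hprod : μ.map (fun ω => (X ω, Y ω)) = (gaussianReal 0 v).prod (gaussianReal 0 w) := by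
    rw [← hvX, ← hwY]
    exact (indepFun_iff_map_prod_eq_prod_map_map hX.aemeasurable hY.aemeasurable).mp hXY
  have h1 : (fun ω => X ω + Y ω) = (fun p : ℝ × ℝ => p.1 + p.2) ∘ (fun ω => (X ω, Y ω)) := rfl
  rw [h1, ← Measure.map_map (g := fun p : ℝ × ℝ => p.1 + p.2) (measurable_fst.add measurable_snd) (hX.prodMk hY), hprod,
    gauss_eq_map_sqrt v, gauss_eq_map_sqrt w,
    Measure.map_prod_map _ _ (measurable_id'.const_mul _) (measurable_id'.const_mul _),
    Measure.map_map (g := fun p : ℝ × ℝ => p.1 + p.2) (measurable_fst.add measurable_snd)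
      ((measurable_id'.const_mul _).prodMap (measurable_id'.const_mul _))]
  have h2 : ((fun p : ℝ × ℝ => p.1 + p.2) ∘
      Prod.map (fun x : ℝ => Real.sqrt v * x) (fun x : ℝ => Real.sqrt w * x))
      = fun p : ℝ × ℝ => Real.sqrt v * p.1 + Real.sqrt w * p.2 := rfl
  rw [h2, map_lin_gauss_prod]
  congr 1
  ext
  rw [Real.coe_toNNReal]
  · rw [Real.sq_sqrt v.coe_nonneg, Real.sq_sqrt w.coe_nonneg]; rfl
  · positivity

lemma gauss_lin_comb {Ω : Type*} [MeasurableSpace Ω] {μ : Measure Ω} [IsProbabilityMeasure μ]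
    (g : ℕ → Ω → ℝ) (hg_meas : ∀ k, Measurable (g k))
    (hg_indep : iIndepFun g μ)
    (hg_gauss : ∀ k, Measure.map (g k) μ = gaussianReal 0 1)
    (b : ℕ → ℝ) (n : ℕ) :
    μ.map (fun ω => ∑ k ∈ Finset.range n, b k * g k ω)
      = gaussianReal 0 (∑ k ∈ Finset.range n, (b k) ^ 2).toNNReal := by
  induction n with
  | zero =>
    simp only [Finset.range_zero, Finset.sum_empty, Real.toNNReal_zero, gaussianReal_zero_var]
    rw [Measure.map_const]
    simp
  | succ n ih =>
    have hX : Measurable (fun ω => ∑ k ∈ Finset.range n, b k * g k ω) :=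
      Finset.measurable_sum _ fun k _ => (hg_meas k).const_mul _
    have hY : Measurable (fun ω => b n * g n ω) := (hg_meas n).const_mul _
    have hYlaw : μ.map (fun ω => b n * g n ω) = gaussianReal 0 ⟨(b n) ^ 2, sq_nonneg _⟩ := by
      have : (fun ω => b n * g n ω) = (fun x : ℝ => b n * x) ∘ g n := rfl
      rw [this, ← Measure.map_map (measurable_id'.const_mul _) (hg_meas n), hg_gauss n,
        gaussianReal_map_const_mul]
      congr 1
      · exact mul_zero _
      · exact mul_one _
    have hind : IndepFun (fun ω => ∑ k ∈ Finset.range n, b k * g k ω)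
        (fun ω => b n * g n ω) μ := by
      have hdisj : Disjoint (Finset.range n) ({n} : Finset ℕ) := by
        simp [Finset.disjoint_singleton_right]
      have h0 := hg_indep.indepFun_finset (Finset.range n) ({n} : Finset ℕ) hdisj hg_meas
      have hφ : Measurable (fun v : ((Finset.range n : Finset ℕ) : Type) → ℝ =>
          ∑ i : (Finset.range n : Finset ℕ), b i * v i) :=
        Finset.measurable_sum _ fun i _ => (measurable_pi_apply i).const_mul _
      have hψ : Measurable (fun v : (({n} : Finset ℕ) : Type) → ℝ =>
          b n * v ⟨n, Finset.mem_singleton_self n⟩) :=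
        (measurable_pi_apply _).const_mul _
      have key := h0.comp hφ hψ
      have e1 : ((fun v : ((Finset.range n : Finset ℕ) : Type) → ℝ =>
          ∑ i : (Finset.range n : Finset ℕ), b i * v i) ∘
            (fun a (i : (Finset.range n : Finset ℕ)) => g i a))
          = fun ω => ∑ k ∈ Finset.range n, b k * g k ω := by
        funext ω
        exact Finset.sum_coe_sort (Finset.range n) (fun k => b k * g k ω)
      have e2 : ((fun v : (({n} : Finset ℕ) : Type) → ℝ =>
          b n * v ⟨n, Finset.mem_singleton_self n⟩) ∘
            (fun a (i : (({n} : Finset ℕ))) => g i a))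
          = fun ω => b n * g n ω := rfl
      rw [e1, e2] at key
      exact key
    have hsum : (fun ω => ∑ k ∈ Finset.range (n + 1), b k * g k ω)
        = fun ω => (∑ k ∈ Finset.range n, b k * g k ω) + b n * g n ω := by
      funext ω
      exact Finset.sum_range_succ _ n
    rw [hsum, gauss_add hX hY hind ih hYlaw]
    congr 1
    ext
    push_cast
    rw [Real.coe_toNNReal _ (Finset.sum_nonneg fun k _ => sq_nonneg _)]
    show ((∑ k ∈ Finset.range n, b k ^ 2).toNNReal : ℝ) + b n ^ 2 = _
    rw [Real.coe_toNNReal _ (Finset.sum_nonneg fun k _ => sq_nonneg _),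
      Finset.sum_range_succ]


lemma integral_gauss_toNNReal (f : BoundedContinuousFunction ℝ ℝ) {v : ℝ} (hv : 0 ≤ v) :
    ∫ x, f x ∂(gaussianReal 0 v.toNNReal)
      = ∫ y, f (Real.sqrt v * y) ∂(gaussianReal 0 1) := by
  have h1 : gaussianReal 0 v.toNNReal = (gaussianReal 0 1).map (fun y : ℝ => Real.sqrt v * y) := by
    rw [gauss_eq_map_sqrt]
    congr 1
    funext y
    rw [Real.coe_toNNReal _ hv]
  rw [h1, integral_map (measurable_id'.const_mul _).aemeasurable
    f.continuous.measurable.aestronglyMeasurable]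

end RFAux

open RFAux

/-- **finite-dimensional Gaussian limit.** If `(sₖ)` are i.i.d. random
elements of `S`, `(gₖ)` are i.i.d. standard Gaussians independent of `(sₖ)`,
`h₁, …, h_m : S → ℝ` are bounded measurable and `c₁, …, c_m ∈ ℝ`, then
`H^{-1/2} ∑_{k<H} gₖ (∑ᵢ cᵢ hᵢ(sₖ))` converges in distribution to
`N(0, ∑ᵢ ∑ⱼ cᵢ cⱼ E[hᵢ(s₁) hⱼ(s₁)])`: for every bounded continuous test function
`f`, the expectations converge to the Gaussian integral. -/
theorem random_feature_linear_combination_tendsto_gaussian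
    {Ω S : Type*} [MeasurableSpace Ω] [MeasurableSpace S]
    (μ : Measure Ω) [IsProbabilityMeasure μ]
    (s : ℕ → Ω → S) (g : ℕ → Ω → ℝ)
    (hs_meas : ∀ k, Measurable (s k))
    (hs_indep : iIndepFun s μ)
    (hs_ident : ∀ k, Measure.map (s k) μ = Measure.map (s 0) μ)
    (hg_meas : ∀ k, Measurable (g k))
    (hg_indep : iIndepFun g μ)
    (hg_gauss : ∀ k, Measure.map (g k) μ = gaussianReal 0 1)
    (hsg_indep : IndepFun (fun ω k => s k ω) (fun ω k => g k ω) μ)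
    (m : ℕ) (h : Fin m → S → ℝ) (hh_meas : ∀ i, Measurable (h i))
    (C : ℝ) (hh_bdd : ∀ i x, |h i x| ≤ C)
    (c : Fin m → ℝ) :
    ∀ f : BoundedContinuousFunction ℝ ℝ,
      Tendsto
        (fun H : ℕ =>
          ∫ ω, f ((1 / Real.sqrt H) *
            ∑ k ∈ Finset.range H, g k ω * (∑ i : Fin m, c i * h i (s k ω))) ∂μ)
        atTop
        (𝓝 (∫ x, f x ∂(gaussianReal 0
          (∑ i : Fin m, ∑ j : Fin m,
            c i * c j * ∫ ω, h i (s 0 ω) * h j (s 0 ω) ∂μ).toNNReal))) := by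
  intro f
  -- the combined feature map
  set a : S → ℝ := fun x => ∑ i : Fin m, c i * h i x with ha_def
  have ha : Measurable a := Finset.measurable_sum _ fun i _ => (hh_meas i).const_mul _
  set B : ℝ := ∑ i : Fin m, |c i| * C with hB_def
  have ha_bdd : ∀ x, |a x| ≤ B := by
    intro x
    refine (Finset.abs_sum_le_sum_abs _ _).trans ?_
    refine Finset.sum_le_sum fun i _ => ?_
    rw [abs_mul]
    exact mul_le_mul_of_nonneg_left (hh_bdd i x) (abs_nonneg _)
  -- the limiting Gaussian integral function
  set G : ℝ → ℝ := fun v => ∫ y, f (Real.sqrt v * y) ∂(gaussianReal 0 1) with hG_def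
  have hGcont : Continuous G := by
    rw [continuous_iff_continuousAt]
    intro v0
    refine tendsto_integral_filter_of_dominated_convergence (fun _ => ‖f‖)
      (Filter.Eventually.of_forall fun v =>
        (f.continuous.comp (continuous_const.mul continuous_id)).measurable.aestronglyMeasurable)
      (Filter.Eventually.of_forall fun v =>
        Filter.Eventually.of_forall fun y => f.norm_coe_le_norm _)
      (integrable_const _)
      (Filter.Eventually.of_forall fun y =>
        ((f.continuous.comp ((Real.continuous_sqrt).mul continuous_const)).tendsto v0))
  have hGbound : ∀ v : ℝ, ‖G v‖ ≤ ‖f‖ := by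
    intro v
    have := norm_integral_le_of_norm_le_const (μ := gaussianReal 0 1) (C := ‖f‖)
      (f := fun y => f (Real.sqrt v * y))
      (Filter.Eventually.of_forall fun y => f.norm_coe_le_norm _)
    simpa using this
  -- variance
  set V : ℝ := ∫ ω, (a (s 0 ω)) ^ 2 ∂μ with hV_def
  have hVnn : 0 ≤ V := integral_nonneg fun ω => sq_nonneg _
  have hVar : (∑ i : Fin m, ∑ j : Fin m,
      c i * c j * ∫ ω, h i (s 0 ω) * h j (s 0 ω) ∂μ) = V := by
    have hint : ∀ i j : Fin m, Integrable (fun ω => h i (s 0 ω) * h j (s 0 ω)) μ := by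
      intro i j
      refine (integrable_const (C * C)).mono'
        (((hh_meas i).comp (hs_meas 0)).mul ((hh_meas j).comp (hs_meas 0))).aestronglyMeasurable
        (Filter.Eventually.of_forall fun ω => ?_)
      rw [Real.norm_eq_abs, abs_mul]
      exact mul_le_mul (hh_bdd i _) (hh_bdd j _) (abs_nonneg _)
        ((abs_nonneg (h i (s 0 ω))).trans (hh_bdd i _))
    have hpt : ∀ ω, (a (s 0 ω)) ^ 2
        = ∑ i : Fin m, ∑ j : Fin m, (c i * c j) * (h i (s 0 ω) * h j (s 0 ω)) := by
      intro ω
      rw [sq, ha_def, Finset.sum_mul_sum]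
      exact Finset.sum_congr rfl fun i _ => Finset.sum_congr rfl fun j _ => by ring
    calc (∑ i : Fin m, ∑ j : Fin m, c i * c j * ∫ ω, h i (s 0 ω) * h j (s 0 ω) ∂μ)
        = ∑ i : Fin m, ∑ j : Fin m, ∫ ω, (c i * c j) * (h i (s 0 ω) * h j (s 0 ω)) ∂μ :=
          Finset.sum_congr rfl fun i _ => Finset.sum_congr rfl fun j _ =>
            (integral_const_mul _ _).symm
      _ = ∑ i : Fin m, ∫ ω, ∑ j : Fin m, (c i * c j) * (h i (s 0 ω) * h j (s 0 ω)) ∂μ :=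
          Finset.sum_congr rfl fun i _ =>
            (integral_finset_sum _ fun j _ => (hint i j).const_mul _).symm
      _ = ∫ ω, ∑ i : Fin m, ∑ j : Fin m, (c i * c j) * (h i (s 0 ω) * h j (s 0 ω)) ∂μ :=
          (integral_finset_sum _ fun i _ =>
            integrable_finset_sum _ fun j _ => (hint i j).const_mul _).symm
      _ = V := by
          rw [hV_def]
          exact integral_congr_ae (Filter.Eventually.of_forall fun ω => (hpt ω).symm)
  -- Fubini step
  have key : ∀ H : ℕ,
      ∫ ω, f ((1 / Real.sqrt H) *
          ∑ k ∈ Finset.range H, g k ω * (∑ i : Fin m, c i * h i (s k ω))) ∂μ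
        = ∫ ω, G ((∑ k ∈ Finset.range H, (a (s k ω)) ^ 2) / H) ∂μ := by
    intro H
    rcases Nat.eq_zero_or_pos H with hH | hHpos
    · subst hH
      simp only [Finset.range_zero, Finset.sum_empty, mul_zero, Nat.cast_zero, _root_.div_zero,
        hG_def, Real.sqrt_zero, zero_mul]
      simp [integral_const]
    -- main case `H ≥ 1`
    set c0 : ℝ := 1 / Real.sqrt H with hc0_def
    have hc0sq : c0 ^ 2 = 1 / H := by
      rw [hc0_def, div_pow, one_pow, Real.sq_sqrt (Nat.cast_nonneg H)]
    set Sv : Ω → (Fin H → S) := fun ω k => s k ω with hSv_def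
    set Gv : Ω → (Fin H → ℝ) := fun ω k => g k ω with hGv_def
    have hSv : Measurable Sv := measurable_pi_lambda _ fun k => hs_meas k
    have hGv : Measurable Gv := measurable_pi_lambda _ fun k => hg_meas k
    haveI : IsProbabilityMeasure (μ.map Sv) := Measure.isProbabilityMeasure_map hSv.aemeasurable
    haveI : IsProbabilityMeasure (μ.map Gv) := Measure.isProbabilityMeasure_map hGv.aemeasurable
    have hindSG : IndepFun Sv Gv μ := by
      have hres1 : Measurable (fun x : ℕ → S => fun k : Fin H => x k) :=
        measurable_pi_lambda _ fun k => measurable_pi_apply _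
      have hres2 : Measurable (fun x : ℕ → ℝ => fun k : Fin H => x k) :=
        measurable_pi_lambda _ fun k => measurable_pi_apply _
      exact hsg_indep.comp hres1 hres2
    have hpair : μ.map (fun ω => (Sv ω, Gv ω)) = (μ.map Sv).prod (μ.map Gv) :=
      (indepFun_iff_map_prod_eq_prod_map_map hSv.aemeasurable hGv.aemeasurable).mp hindSG
    set Φ : (Fin H → S) × (Fin H → ℝ) → ℝ :=
      fun p => f (c0 * ∑ k : Fin H, p.2 k * a (p.1 k)) with hΦ_def
    have hΦm : Measurable Φ := by
      refine f.continuous.measurable.comp (Measurable.const_mul ?_ c0)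
      exact Finset.measurable_sum Finset.univ fun k _ =>
        ((measurable_pi_apply k).comp measurable_snd).mul
          (ha.comp ((measurable_pi_apply k).comp measurable_fst))
    have hΦint : Integrable Φ ((μ.map Sv).prod (μ.map Gv)) :=
      (integrable_const ‖f‖).mono' hΦm.aestronglyMeasurable
        (Filter.Eventually.of_forall fun p => f.norm_coe_le_norm _)
    set W : (Fin H → S) → ℝ := fun σ => (∑ k : Fin H, (a (σ k)) ^ 2) / H with hW_def
    have hWm : Measurable W :=
      (Finset.measurable_sum _ fun k _ =>
        ((ha.comp (measurable_pi_apply k)).pow_const 2)).div_const _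
    have hWnn : ∀ σ, 0 ≤ W σ :=
      fun σ => div_nonneg (Finset.sum_nonneg fun k _ => sq_nonneg _) (Nat.cast_nonneg H)
    have inner : ∀ σ : Fin H → S, ∫ γ, Φ (σ, γ) ∂(μ.map Gv) = G (W σ) := by
      intro σ
      set b : ℕ → ℝ := fun j => if hj : j < H then c0 * a (σ ⟨j, hj⟩) else 0 with hb_def
      have hbk : ∀ k : Fin H, b (k : ℕ) = c0 * a (σ k) := by
        intro k
        rw [hb_def]
        simp only [k.isLt, dif_pos, Fin.eta]
      have hsummeas : Measurable (fun ω => ∑ j ∈ Finset.range H, b j * g j ω) :=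
        Finset.measurable_sum _ fun j _ => (hg_meas j).const_mul _
      calc ∫ γ, Φ (σ, γ) ∂(μ.map Gv)
          = ∫ ω, Φ (σ, Gv ω) ∂μ :=
            integral_map hGv.aemeasurable
              (hΦm.comp measurable_prodMk_left).aestronglyMeasurable
        _ = ∫ ω, f (∑ j ∈ Finset.range H, b j * g j ω) ∂μ := by
            refine integral_congr_ae (Filter.Eventually.of_forall fun ω => ?_)
            rw [hΦ_def]
            simp only []
            congr 1
            rw [← Fin.sum_univ_eq_sum_range (fun j => b j * g j ω) H, Finset.mul_sum]
            exact Finset.sum_congr rfl fun k _ => by rw [hbk k]; ring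
        _ = ∫ x, f x ∂(μ.map (fun ω => ∑ j ∈ Finset.range H, b j * g j ω)) :=
            (integral_map hsummeas.aemeasurable
              f.continuous.measurable.aestronglyMeasurable).symm
        _ = ∫ x, f x ∂(gaussianReal 0 (∑ j ∈ Finset.range H, (b j) ^ 2).toNNReal) := by
            rw [gauss_lin_comb g hg_meas hg_indep hg_gauss b H]
        _ = G (W σ) := by
            have hbs : ∑ j ∈ Finset.range H, (b j) ^ 2 = W σ := by
              rw [← Fin.sum_univ_eq_sum_range (fun j => (b j) ^ 2) H]
              rw [hW_def]
              rw [show ∑ k : Fin H, (b (k : ℕ)) ^ 2 = ∑ k : Fin H, c0 ^ 2 * (a (σ k)) ^ 2 from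
                Finset.sum_congr rfl fun k _ => by rw [hbk k, mul_pow]]
              rw [← Finset.mul_sum, hc0sq]
              ring
            rw [hbs, integral_gauss_toNNReal f (hWnn σ), hG_def]
    calc ∫ ω, f ((1 / Real.sqrt H) *
            ∑ k ∈ Finset.range H, g k ω * (∑ i : Fin m, c i * h i (s k ω))) ∂μ
        = ∫ ω, Φ (Sv ω, Gv ω) ∂μ := by
          refine integral_congr_ae (Filter.Eventually.of_forall fun ω => ?_)
          rw [hΦ_def]
          simp only []
          congr 1
          rw [← Fin.sum_univ_eq_sum_range (fun k => g k ω * a (s k ω)) H]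
      _ = ∫ p, Φ p ∂(μ.map (fun ω => (Sv ω, Gv ω))) :=
          (integral_map (hSv.prodMk hGv).aemeasurable hΦm.aestronglyMeasurable).symm
      _ = ∫ p, Φ p ∂((μ.map Sv).prod (μ.map Gv)) := by rw [hpair]
      _ = ∫ σ, ∫ γ, Φ (σ, γ) ∂(μ.map Gv) ∂(μ.map Sv) := integral_prod _ hΦint
      _ = ∫ σ, G (W σ) ∂(μ.map Sv) :=
          integral_congr_ae (Filter.Eventually.of_forall inner)
      _ = ∫ ω, G (W (Sv ω)) ∂μ :=
          integral_map hSv.aemeasurable (hGcont.measurable.comp hWm).aestronglyMeasurable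
      _ = ∫ ω, G ((∑ k ∈ Finset.range H, (a (s k ω)) ^ 2) / H) ∂μ := by
          refine integral_congr_ae (Filter.Eventually.of_forall fun ω => ?_)
          rw [hW_def]
          simp only []
          rw [← Fin.sum_univ_eq_sum_range (fun k => (a (s k ω)) ^ 2) H]
  -- strong law of large numbers
  have hlln : ∀ᵐ ω ∂μ, Tendsto
      (fun n : ℕ => (∑ k ∈ Finset.range n, (a (s k ω)) ^ 2) / n) atTop (𝓝 V) := by
    have hq : Measurable (fun x : S => (a x) ^ 2) := ha.pow_const 2
    have hint : Integrable (fun ω => (a (s 0 ω)) ^ 2) μ := by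
      refine (integrable_const (B ^ 2)).mono'
        (hq.comp (hs_meas 0)).aestronglyMeasurable (Filter.Eventually.of_forall fun ω => ?_)
      rw [Real.norm_eq_abs, abs_pow]
      exact pow_le_pow_left₀ (abs_nonneg _) (ha_bdd _) 2
    have hindep : Pairwise (Function.onFun (IndepFun · · μ) fun k ω => (a (s k ω)) ^ 2) :=
      fun i j hij => ((hs_indep.indepFun hij).comp hq hq : _)
    have hident : ∀ k, IdentDistrib (fun ω => (a (s k ω)) ^ 2) (fun ω => (a (s 0 ω)) ^ 2) μ μ :=
      fun k => IdentDistrib.comp ⟨(hs_meas k).aemeasurable, (hs_meas 0).aemeasurable, hs_ident k⟩ hq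
    exact ProbabilityTheory.strong_law_ae_real _ hint hindep hident
  -- conclude by dominated convergence
  have hfinal : Tendsto
      (fun H : ℕ => ∫ ω, G ((∑ k ∈ Finset.range H, (a (s k ω)) ^ 2) / H) ∂μ)
      atTop (𝓝 (G V)) := by
    have hmeasW : ∀ H : ℕ, Measurable fun ω => (∑ k ∈ Finset.range H, (a (s k ω)) ^ 2) / H :=
      fun H => (Finset.measurable_sum _ fun k _ => ((ha.comp (hs_meas k)).pow_const 2)).div_const _
    have := tendsto_integral_filter_of_dominated_convergence (μ := μ) (l := atTop)
      (F := fun H ω => G ((∑ k ∈ Finset.range H, (a (s k ω)) ^ 2) / H))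
      (f := fun _ => G V) (bound := fun _ => ‖f‖)
      (Filter.Eventually.of_forall fun H =>
        (hGcont.measurable.comp (hmeasW H)).aestronglyMeasurable)
      (Filter.Eventually.of_forall fun H =>
        Filter.Eventually.of_forall fun ω => hGbound _)
      (integrable_const _)
      (by
        filter_upwards [hlln] with ω hω
        exact (hGcont.tendsto V).comp hω)
    simpa [integral_const] using this
  rw [hVar, integral_gauss_toNNReal f hVnn]
  have hfun : (fun H : ℕ =>
      ∫ ω, f ((1 / Real.sqrt H) *
          ∑ k ∈ Finset.range H, g k ω * (∑ i : Fin m, c i * h i (s k ω))) ∂μ)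
      = fun H : ℕ => ∫ ω, G ((∑ k ∈ Finset.range H, (a (s k ω)) ^ 2) / H) ∂μ :=
    funext key
  rw [hfun]
  exact hfinal
end

section
/- (Theorem 1, almost-sure kernel convergence.) Let x : ℤ → ℝ be a process that is wide-sense stationary with mean zero and covariance function K satisfying K(0) > 0, and let x(1,·), x(2,·), … be i.i.d. copies of x (the channels). Fix a window size d ≥ 1 and positions t_1, t_2 ∈ ℤ, write r = t_2 − t_1, and let X̄_c(t) ∈ ℝ^{cd} be the concatenation of the window vectors x̄_k(t) over channels k = 1, …, c. Define ρ_c = X̄_c(t_1) · X̄_c(t_2) / (‖X̄_c(t_1)‖ ‖X̄_c(t_2)‖) when both norms are nonzero, and ρ_c = 0 otherwise. Then (2/π) arcsin(ρ_c) converges almost surely, as c → ∞, to (2/π) arcsin( K(r) / K(0) ). -/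
open MeasureTheory ProbabilityTheory Filter Topology

/-- Inner product `X̄_c(t) ⬝ X̄_c(t')` of the stacked window vectors in `ℝ^{cd}`:
the sum over channels `k < c` of the inner products of the window vectors
`(xc k (t), …, xc k (t − d + 1))`. -/
def stackedDot {Ω : Type*} (xc : ℕ → ℤ → Ω → ℝ) (d c : ℕ) (t t' : ℤ) (ω : Ω) : ℝ :=
  ∑ k ∈ Finset.range c, ∑ i ∈ Finset.range d, xc k (t - i) ω * xc k (t' - i) ω

/-- Euclidean norm `‖X̄_c(t)‖` of the stacked window vector. -/
noncomputable def stackedNorm {Ω : Type*} (xc : ℕ → ℤ → Ω → ℝ) (d c : ℕ)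
    (t : ℤ) (ω : Ω) : ℝ :=
  Real.sqrt (stackedDot xc d c t t ω)

/-- Normalized correlation `ρ_c = X̄_c(t₁) ⬝ X̄_c(t₂) / (‖X̄_c(t₁)‖ ‖X̄_c(t₂)‖)` when both
norms are nonzero, and `0` otherwise. -/
noncomputable def stackedCorr {Ω : Type*} (xc : ℕ → ℤ → Ω → ℝ) (d c : ℕ)
    (t₁ t₂ : ℤ) (ω : Ω) : ℝ :=
  if stackedNorm xc d c t₁ ω ≠ 0 ∧ stackedNorm xc d c t₂ ω ≠ 0 then
    stackedDot xc d c t₁ t₂ ω / (stackedNorm xc d c t₁ ω * stackedNorm xc d c t₂ ω)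
  else 0

private lemma slln_dot
    {Ω : Type*} [MeasurableSpace Ω] (μ : Measure Ω) [IsProbabilityMeasure μ]
    (x : ℤ → Ω → ℝ) (K : ℤ → ℝ)
    (hx_meas : ∀ t, Measurable (x t))
    (hL2 : ∀ t, MemLp (x t) 2 μ)
    (hcov : ∀ t₁ t₂, ∫ ω, x t₁ ω * x t₂ ω ∂μ = K (t₁ - t₂))
    (xc : ℕ → ℤ → Ω → ℝ)
    (hxc_meas : ∀ k t, Measurable (xc k t))
    (hxc_indep : iIndepFun (fun k ω (t : ℤ) => xc k t ω) μ)
    (hxc_copy : ∀ k, Measure.map (fun ω (t : ℤ) => xc k t ω) μ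
      = Measure.map (fun ω (t : ℤ) => x t ω) μ)
    (d : ℕ) (a b : ℤ) :
    ∀ᵐ ω ∂μ, Tendsto
      (fun c : ℕ => (∑ k ∈ Finset.range c, ∑ i ∈ Finset.range d,
        xc k (a - i) ω * xc k (b - i) ω) / c) atTop (𝓝 ((d : ℝ) * K (a - b))) := by
  set g : (ℤ → ℝ) → ℝ := fun f => ∑ i ∈ Finset.range d, f (a - i) * f (b - i) with hg_def
  have hg : Measurable g :=
    Finset.measurable_sum _ fun i _ => (measurable_pi_apply _).mul (measurable_pi_apply _)
  set Φ : ℕ → Ω → (ℤ → ℝ) := fun k ω t => xc k t ω with hΦ_def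
  have hΦm : ∀ k, Measurable (Φ k) := fun k => measurable_pi_lambda _ fun t => hxc_meas k t
  set Φx : Ω → (ℤ → ℝ) := fun ω t => x t ω with hΦx_def
  have hΦxm : Measurable Φx := measurable_pi_lambda _ fun t => hx_meas t
  set X : ℕ → Ω → ℝ := fun k => g ∘ Φ k with hX_def
  have hΦid : ∀ k, IdentDistrib (Φ k) (Φ 0) μ μ := fun k =>
    ⟨(hΦm k).aemeasurable, (hΦm 0).aemeasurable, by rw [hxc_copy k, hxc_copy 0]⟩
  have hident : ∀ k, IdentDistrib (X k) (X 0) μ μ := fun k => (hΦid k).comp hg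
  have hindep : Pairwise (Function.onFun (IndepFun · · μ) X) := fun i j hij =>
    (hxc_indep.comp (fun _ => g) fun _ => hg).indepFun hij
  have hid0 : IdentDistrib (X 0) (g ∘ Φx) μ μ :=
    IdentDistrib.comp ⟨(hΦm 0).aemeasurable, hΦxm.aemeasurable, hxc_copy 0⟩ hg
  have hterm : ∀ i : ℕ, Integrable (fun ω => x (a - i) ω * x (b - i) ω) μ := by
    intro i
    have := (hL2 (b - (i : ℤ))).smul (hL2 (a - (i : ℤ)))
      (p := 2) (q := 2) (r := 1)
    exact memLp_one_iff_integrable.mp this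
  have hintx : Integrable (g ∘ Φx) μ := by
    have : (g ∘ Φx) = fun ω => ∑ i ∈ Finset.range d, x (a - i) ω * x (b - i) ω := rfl
    rw [this]
    exact integrable_finset_sum _ fun i _ => hterm i
  have hint : Integrable (X 0) μ := hid0.integrable_iff.mpr hintx
  have hmean : ∫ ω, X 0 ω ∂μ = (d : ℝ) * K (a - b) := by
    rw [hid0.integral_eq]
    have : ∫ ω, (g ∘ Φx) ω ∂μ
        = ∑ i ∈ Finset.range d, ∫ ω, x (a - i) ω * x (b - i) ω ∂μ :=
      integral_finset_sum _ fun i _ => hterm i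
    rw [this]
    have : ∀ i ∈ Finset.range d, ∫ ω, x (a - i) ω * x (b - i) ω ∂μ = K (a - b) := by
      intro i _
      rw [hcov]; ring_nf
    rw [Finset.sum_congr rfl this, Finset.sum_const, Finset.card_range, nsmul_eq_mul]
  have := strong_law_ae_real X hint hindep hident
  filter_upwards [this] with ω hω
  rw [hmean] at hω
  exact hω

/-- **Theorem 1, almost-sure kernel convergence.** For a wide-sense
stationary mean-zero process `x` with covariance `K`, `K(0) > 0`, and i.i.d. channel
copies `xc k`, the sigmoid (erf) kernel `(2/π) arcsin ρ_c` converges almost surely to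
`(2/π) arcsin(K(r)/K(0))`, where `r = t₂ − t₁`. -/
theorem erf_kernel_tendsto_ae
    {Ω : Type*} [MeasurableSpace Ω] (μ : Measure Ω) [IsProbabilityMeasure μ]
    (x : ℤ → Ω → ℝ) (K : ℤ → ℝ)
    (hx_meas : ∀ t, Measurable (x t))
    (hL2 : ∀ t, MemLp (x t) 2 μ)
    (hmean : ∀ t, ∫ ω, x t ω ∂μ = 0)
    (hcov : ∀ t₁ t₂, ∫ ω, x t₁ ω * x t₂ ω ∂μ = K (t₁ - t₂))
    (hK0 : 0 < K 0)
    (xc : ℕ → ℤ → Ω → ℝ)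
    (hxc_meas : ∀ k t, Measurable (xc k t))
    (hxc_indep : iIndepFun (fun k ω (t : ℤ) => xc k t ω) μ)
    (hxc_copy : ∀ k, Measure.map (fun ω (t : ℤ) => xc k t ω) μ
      = Measure.map (fun ω (t : ℤ) => x t ω) μ)
    (d : ℕ) (hd : 1 ≤ d) (t₁ t₂ : ℤ) :
    ∀ᵐ ω ∂μ,
      Tendsto (fun c : ℕ => (2 / Real.pi) * Real.arcsin (stackedCorr xc d c t₁ t₂ ω))
        atTop (𝓝 ((2 / Real.pi) * Real.arcsin (K (t₂ - t₁) / K 0))) := by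
  
  have hsym : K (t₁ - t₂) = K (t₂ - t₁) := by
    rw [← hcov t₁ t₂, ← hcov t₂ t₁]
    simp_rw [mul_comm]
  have h12 := slln_dot μ x K hx_meas hL2 hcov xc hxc_meas hxc_indep hxc_copy d t₁ t₂
  have h11 := slln_dot μ x K hx_meas hL2 hcov xc hxc_meas hxc_indep hxc_copy d t₁ t₁
  have h22 := slln_dot μ x K hx_meas hL2 hcov xc hxc_meas hxc_indep hxc_copy d t₂ t₂
  rw [sub_self] at h11 h22
  filter_upwards [h12, h11, h22] with ω hA hB hC
  have hdpos : (0:ℝ) < d := by exact_mod_cast hd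
  have hdK0 : (0:ℝ) < (d : ℝ) * K 0 := mul_pos hdpos hK0
  have hden : Tendsto (fun c : ℕ =>
      Real.sqrt ((∑ k ∈ Finset.range c, ∑ i ∈ Finset.range d,
          xc k (t₁ - i) ω * xc k (t₁ - i) ω) / c) *
      Real.sqrt ((∑ k ∈ Finset.range c, ∑ i ∈ Finset.range d,
          xc k (t₂ - i) ω * xc k (t₂ - i) ω) / c)) atTop (𝓝 ((d : ℝ) * K 0)) := by
    have := hB.sqrt.mul hC.sqrt
    rwa [Real.mul_self_sqrt hdK0.le] at this
  have hratio := hA.div hden hdK0.ne'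
  have hlim : ((d:ℝ) * K (t₁ - t₂)) / ((d:ℝ) * K 0) = K (t₂ - t₁) / K 0 := by
    rw [mul_div_mul_left _ _ hdpos.ne', hsym]
  rw [hlim] at hratio
  have hBpos := hB.eventually (eventually_gt_nhds hdK0)
  have hCpos := hC.eventually (eventually_gt_nhds hdK0)
  have heq : ∀ᶠ c : ℕ in atTop,
      (∑ k ∈ Finset.range c, ∑ i ∈ Finset.range d,
          xc k (t₁ - i) ω * xc k (t₂ - i) ω) / c /
        (Real.sqrt ((∑ k ∈ Finset.range c, ∑ i ∈ Finset.range d,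
            xc k (t₁ - i) ω * xc k (t₁ - i) ω) / c) *
         Real.sqrt ((∑ k ∈ Finset.range c, ∑ i ∈ Finset.range d,
            xc k (t₂ - i) ω * xc k (t₂ - i) ω) / c))
      = stackedCorr xc d c t₁ t₂ ω := by
    filter_upwards [hBpos, hCpos, eventually_gt_atTop 0] with c hb hc hcpos
    have hcR : (0:ℝ) < c := by exact_mod_cast hcpos
    set S11 := stackedDot xc d c t₁ t₁ ω with hS11def
    set S22 := stackedDot xc d c t₂ t₂ ω with hS22def
    set S12 := stackedDot xc d c t₁ t₂ ω with hS12def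
    have hb' : 0 < S11 / c := hb
    have hc' : 0 < S22 / c := hc
    have hS11 : 0 < S11 := by
      have := mul_pos hb' hcR
      rwa [div_mul_cancel₀ _ hcR.ne'] at this
    have hS22 : 0 < S22 := by
      have := mul_pos hc' hcR
      rwa [div_mul_cancel₀ _ hcR.ne'] at this
    have hn1 : stackedNorm xc d c t₁ ω ≠ 0 := (Real.sqrt_pos.mpr hS11).ne'
    have hn2 : stackedNorm xc d c t₂ ω ≠ 0 := (Real.sqrt_pos.mpr hS22).ne'
    have hrw : stackedCorr xc d c t₁ t₂ ω
        = S12 / (Real.sqrt S11 * Real.sqrt S22) := by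
      rw [stackedCorr, if_pos ⟨hn1, hn2⟩]; rfl
    show S12 / c / (Real.sqrt (S11 / c) * Real.sqrt (S22 / c)) = _
    rw [hrw, Real.sqrt_div hS11.le, Real.sqrt_div hS22.le]
    have h1 : Real.sqrt S11 ≠ 0 := (Real.sqrt_pos.mpr hS11).ne'
    have h2 : Real.sqrt S22 ≠ 0 := (Real.sqrt_pos.mpr hS22).ne'
    have h3 : Real.sqrt c ≠ 0 := (Real.sqrt_pos.mpr hcR).ne'
    have h4 : Real.sqrt c * Real.sqrt c = c := Real.mul_self_sqrt hcR.le
    field_simp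
    rw [sq, h4]
  have hcorr : Tendsto (fun c : ℕ => stackedCorr xc d c t₁ t₂ ω) atTop
      (𝓝 (K (t₂ - t₁) / K 0)) := hratio.congr' heq
  exact ((Real.continuous_arcsin.tendsto _).comp hcorr).const_mul _
end

section
/- (Theorem 1, convergence of the covariance kernel in expectation.) Let x : ℤ → ℝ be a process that is wide-sense stationary with mean zero and covariance function K satisfying K(0) > 0, and let x(1,·), x(2,·), … be i.i.d. copies of x. Fix a window size d ≥ 1, positions t_1, t_2 ∈ ℤ with r = t_2 − t_1, let X̄_c(t) ∈ ℝ^{cd} be the stacked window vector over c channels, and define ρ_c = X̄_c(t_1) · X̄_c(t_2) / (‖X̄_c(t_1)‖ ‖X̄_c(t_2)‖) when both norms are nonzero and ρ_c = 0 otherwise. Then E[(2/π) arcsin(ρ_c)] converges, as c → ∞, to (2/π) arcsin( K(r) / K(0) ). -/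
open MeasureTheory ProbabilityTheory Filter Topology

/-- **Theorem 1, convergence of the covariance kernel in
expectation.** For a wide-sense stationary mean-zero process `x` with covariance
`K`, `K(0) > 0`, and i.i.d. channel copies `xc k`, the expectation
`E[(2/π) arcsin ρ_c]` converges to `(2/π) arcsin(K(r)/K(0))`, where `r = t₂ − t₁`. -/
theorem erf_kernel_expectation_tendsto
    {Ω : Type*} [MeasurableSpace Ω] (μ : Measure Ω) [IsProbabilityMeasure μ]
    (x : ℤ → Ω → ℝ) (K : ℤ → ℝ)
    (hx_meas : ∀ t, Measurable (x t))
    (hL2 : ∀ t, MemLp (x t) 2 μ)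
    (hmean : ∀ t, ∫ ω, x t ω ∂μ = 0)
    (hcov : ∀ t₁ t₂, ∫ ω, x t₁ ω * x t₂ ω ∂μ = K (t₁ - t₂))
    (hK0 : 0 < K 0)
    (xc : ℕ → ℤ → Ω → ℝ)
    (hxc_meas : ∀ k t, Measurable (xc k t))
    (hxc_indep : iIndepFun (fun k ω (t : ℤ) => xc k t ω) μ)
    (hxc_copy : ∀ k, Measure.map (fun ω (t : ℤ) => xc k t ω) μ
      = Measure.map (fun ω (t : ℤ) => x t ω) μ)
    (d : ℕ) (hd : 1 ≤ d) (t₁ t₂ : ℤ) :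
    Tendsto
      (fun c : ℕ => ∫ ω, (2 / Real.pi) * Real.arcsin (stackedCorr xc d c t₁ t₂ ω) ∂μ)
      atTop (𝓝 ((2 / Real.pi) * Real.arcsin (K (t₂ - t₁) / K 0))) := by
  classical
  set F : ℕ → Ω → (ℤ → ℝ) := fun k ω t => xc k t ω with hF
  have hF_meas : ∀ k, Measurable (F k) := fun k =>
    measurable_pi_lambda _ (fun t => hxc_meas k t)
  have hFx_meas : Measurable (fun ω (t : ℤ) => x t ω) :=
    measurable_pi_lambda _ (fun t => hx_meas t)
  have hFid : ∀ k, IdentDistrib (F k) (fun ω (t : ℤ) => x t ω) μ μ := fun k =>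
    ⟨(hF_meas k).aemeasurable, hFx_meas.aemeasurable, hxc_copy k⟩
  -- memℒp of channel variables
  have hL2c : ∀ k t0, MemLp (xc k t0) 2 μ := fun k t0 =>
    (((hFid k).comp (measurable_pi_apply t0)).memLp_iff).mpr (hL2 t0)
  -- main SLLN step
  have main : ∀ t t' : ℤ, ∀ᵐ ω ∂μ,
      Tendsto (fun c : ℕ => stackedDot xc d c t t' ω / c) atTop
        (𝓝 ((d : ℝ) * K (t - t'))) := by
    intro t t'
    set g : (ℤ → ℝ) → ℝ := fun p => ∑ i ∈ Finset.range d, p (t - i) * p (t' - i) with hg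
    have hg_meas : Measurable g :=
      Finset.measurable_sum _ fun i _ =>
        ((measurable_pi_apply _).mul (measurable_pi_apply _))
    set Y : ℕ → Ω → ℝ := fun k ω => g (F k ω) with hY
    have hYint : ∀ k, ∀ a b : ℤ, Integrable (fun ω => xc k a ω * xc k b ω) μ := by
      intro k a b
      have h := MeasureTheory.MemLp.smul (𝕜 := ℝ) (E := ℝ) (p := 2) (q := 2) (r := 1)
        (hL2c k b) (hL2c k a) (hpqr := ⟨by norm_num [ENNReal.inv_two_add_inv_two]⟩)
      rw [memLp_one_iff_integrable] at h
      exact h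
    have hint : Integrable (Y 0) μ := by
      have : Y 0 = fun ω => ∑ i ∈ Finset.range d, xc 0 (t - i) ω * xc 0 (t' - i) ω := rfl
      rw [this]
      exact integrable_finset_sum _ fun i _ => hYint 0 _ _
    have hindep : Pairwise (Function.onFun (IndepFun · · μ) Y) := by
      intro i j hij
      exact (hxc_indep.indepFun hij).comp hg_meas hg_meas
    have hident : ∀ k, IdentDistrib (Y k) (Y 0) μ μ := fun k =>
      ((hFid k).trans (hFid 0).symm).comp hg_meas
    have hSLLN := strong_law_ae_real Y hint hindep hident
    have hEY : ∫ ω, Y 0 ω ∂μ = (d : ℝ) * K (t - t') := by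
      have h1 : ∫ ω, Y 0 ω ∂μ
          = ∑ i ∈ Finset.range d, ∫ ω, xc 0 (t - i) ω * xc 0 (t' - i) ω ∂μ := by
        exact integral_finset_sum _ fun i _ => hYint 0 _ _
      have h2 : ∀ i : ℕ, ∫ ω, xc 0 (t - i) ω * xc 0 (t' - i) ω ∂μ = K (t - t') := by
        intro i
        have hid : IdentDistrib (fun ω => xc 0 (t - i) ω * xc 0 (t' - i) ω)
            (fun ω => x (t - i) ω * x (t' - i) ω) μ μ :=
          (hFid 0).comp ((measurable_pi_apply (t - i)).mul (measurable_pi_apply (t' - i)))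
        rw [hid.integral_eq, hcov]
        ring_nf
      rw [h1]
      simp only [h2, Finset.sum_const, Finset.card_range, nsmul_eq_mul]
    rw [hEY] at hSLLN
    exact hSLLN
  -- symmetry of K
  have Ksymm : K (t₁ - t₂) = K (t₂ - t₁) := by
    rw [← hcov t₁ t₂, ← hcov t₂ t₁]
    exact integral_congr_ae (Filter.Eventually.of_forall fun ω => mul_comm _ _)
  have hdpos : (0 : ℝ) < d := by exact_mod_cast hd
  have hdK0 : (0 : ℝ) < (d : ℝ) * K 0 := by positivity
  have hdot_nonneg : ∀ (c : ℕ) (t : ℤ) (ω : Ω), 0 ≤ stackedDot xc d c t t ω := by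
    intro c t ω
    apply Finset.sum_nonneg
    intro k _
    exact Finset.sum_nonneg fun i _ => mul_self_nonneg _
  -- a.e. convergence of the correlation
  have haeρ : ∀ᵐ ω ∂μ,
      Tendsto (fun c : ℕ => stackedCorr xc d c t₁ t₂ ω) atTop (𝓝 (K (t₂ - t₁) / K 0)) := by
    filter_upwards [main t₁ t₂, main t₁ t₁, main t₂ t₂] with ω hA hB hC
    have hBK : Tendsto (fun c : ℕ => stackedDot xc d c t₁ t₁ ω / c) atTop
        (𝓝 ((d : ℝ) * K 0)) := by simpa using hB
    have hCK : Tendsto (fun c : ℕ => stackedDot xc d c t₂ t₂ ω / c) atTop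
        (𝓝 ((d : ℝ) * K 0)) := by simpa using hC
    have hden : Tendsto (fun c : ℕ =>
        Real.sqrt (stackedDot xc d c t₁ t₁ ω / c) * Real.sqrt (stackedDot xc d c t₂ t₂ ω / c))
        atTop (𝓝 (Real.sqrt ((d : ℝ) * K 0) * Real.sqrt ((d : ℝ) * K 0))) :=
      ((Real.continuous_sqrt.tendsto _).comp hBK).mul
        ((Real.continuous_sqrt.tendsto _).comp hCK)
    have hdenval : Real.sqrt ((d : ℝ) * K 0) * Real.sqrt ((d : ℝ) * K 0) = (d : ℝ) * K 0 :=
      Real.mul_self_sqrt hdK0.le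
    have hlim : Tendsto (fun c : ℕ =>
        (stackedDot xc d c t₁ t₂ ω / c) /
          (Real.sqrt (stackedDot xc d c t₁ t₁ ω / c) *
            Real.sqrt (stackedDot xc d c t₂ t₂ ω / c)))
        atTop (𝓝 (((d : ℝ) * K (t₁ - t₂)) / ((d : ℝ) * K 0))) := by
      have := hA.div (hdenval ▸ hden) hdK0.ne'
      exact this
    have hlimval : ((d : ℝ) * K (t₁ - t₂)) / ((d : ℝ) * K 0) = K (t₂ - t₁) / K 0 := by
      rw [mul_div_mul_left _ _ hdpos.ne', Ksymm]
    rw [hlimval] at hlim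
    -- eventual equality with stackedCorr
    have hBev : ∀ᶠ c : ℕ in atTop, 0 < stackedDot xc d c t₁ t₁ ω / c :=
      hBK.eventually (eventually_gt_nhds hdK0)
    have hCev : ∀ᶠ c : ℕ in atTop, 0 < stackedDot xc d c t₂ t₂ ω / c :=
      hCK.eventually (eventually_gt_nhds hdK0)
    apply hlim.congr'
    filter_upwards [hBev, hCev, eventually_gt_atTop 0] with c hBc hCc hc
    have hcR : (0 : ℝ) < c := by exact_mod_cast hc
    have hB0 : 0 < stackedDot xc d c t₁ t₁ ω := by
      have := mul_pos hBc hcR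
      rwa [div_mul_cancel₀ _ hcR.ne'] at this
    have hC0 : 0 < stackedDot xc d c t₂ t₂ ω := by
      have := mul_pos hCc hcR
      rwa [div_mul_cancel₀ _ hcR.ne'] at this
    have hN1 : stackedNorm xc d c t₁ ω ≠ 0 := by
      simp only [stackedNorm]
      positivity
    have hN2 : stackedNorm xc d c t₂ ω ≠ 0 := by
      simp only [stackedNorm]
      positivity
    rw [stackedCorr, if_pos ⟨hN1, hN2⟩]
    simp only [stackedNorm]
    rw [Real.sqrt_div (hdot_nonneg c t₁ ω), Real.sqrt_div (hdot_nonneg c t₂ ω),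
      div_mul_div_comm, Real.mul_self_sqrt hcR.le]
    have h1 : Real.sqrt (stackedDot xc d c t₁ t₁ ω) ≠ 0 := (Real.sqrt_pos.mpr hB0).ne'
    have h2 : Real.sqrt (stackedDot xc d c t₂ t₂ ω) ≠ 0 := (Real.sqrt_pos.mpr hC0).ne'
    field_simp
  -- dominated convergence
  have hdot_meas : ∀ (c : ℕ) (t t' : ℤ), Measurable (fun ω => stackedDot xc d c t t' ω) := by
    intro c t t'
    apply Finset.measurable_sum
    intro k _
    exact Finset.measurable_sum _ fun i _ => (hxc_meas k _).mul (hxc_meas k _)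
  have hρ_meas : ∀ c : ℕ, Measurable (fun ω => stackedCorr xc d c t₁ t₂ ω) := by
    intro c
    have hN : ∀ t : ℤ, Measurable (fun ω => stackedNorm xc d c t ω) := fun t =>
      (Real.continuous_sqrt.measurable).comp (hdot_meas c t t)
    unfold stackedCorr
    apply Measurable.ite
    · exact MeasurableSet.inter
        (((hN t₁) (measurableSet_singleton 0)).compl)
        (((hN t₂) (measurableSet_singleton 0)).compl)
    · exact ((hdot_meas c t₁ t₂).div ((hN t₁).mul (hN t₂)))
    · exact measurable_const
  have hDCT := tendsto_integral_of_dominated_convergence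
    (μ := μ)
    (F := fun (c : ℕ) ω => (2 / Real.pi) * Real.arcsin (stackedCorr xc d c t₁ t₂ ω))
    (f := fun _ => (2 / Real.pi) * Real.arcsin (K (t₂ - t₁) / K 0))
    (fun _ => (1 : ℝ)) ?_ ?_ ?_ ?_
  · simpa using hDCT
  · intro c
    exact (measurable_const.mul
      (Real.continuous_arcsin.measurable.comp (hρ_meas c))).aestronglyMeasurable
  · exact integrable_const 1
  · intro c
    filter_upwards with ω
    have h1 : |Real.arcsin (stackedCorr xc d c t₁ t₂ ω)| ≤ Real.pi / 2 :=
      abs_le.2 ⟨Real.neg_pi_div_two_le_arcsin _, Real.arcsin_le_pi_div_two _⟩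
    have hπ : (0 : ℝ) < Real.pi := Real.pi_pos
    calc ‖2 / Real.pi * Real.arcsin (stackedCorr xc d c t₁ t₂ ω)‖
        = (2 / Real.pi) * |Real.arcsin (stackedCorr xc d c t₁ t₂ ω)| := by
          rw [Real.norm_eq_abs, abs_mul, abs_of_pos (by positivity)]
      _ ≤ (2 / Real.pi) * (Real.pi / 2) := by
          exact mul_le_mul_of_nonneg_left h1 (by positivity)
      _ = 1 := by field_simp
  · filter_upwards [haeρ] with ω hω
    exact (tendsto_const_nhds.mul ((Real.continuous_arcsin.tendsto _).comp hω))
end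

section
/- (Lemma 1, ReLU kernel convergence.) Let x : ℤ → ℝ be a process that is wide-sense stationary with mean zero and covariance function K satisfying K(0) > 0, and let x(1,·), x(2,·), … be i.i.d. copies of x. Fix a window size d ≥ 1, positions t_1, t_2 ∈ ℤ with r = t_2 − t_1, let X̄_c(t) ∈ ℝ^{cd} be the stacked window vector over c channels, and define θ_c = arccos( X̄_c(t_1) · X̄_c(t_2) / (‖X̄_c(t_1)‖ ‖X̄_c(t_2)‖) ) when both norms are nonzero and θ_c = π/2 otherwise. Then the normalized ReLU arc-cosine kernel (1/(c d)) · (1/(2π)) · ‖X̄_c(t_1)‖ · ‖X̄_c(t_2)‖ · ( sin θ_c + (π − θ_c) cos θ_c ) converges almost surely, as c → ∞, to (K(0)/(2π)) · ( sin θ + (π − θ) cos θ ), where θ = arccos( K(r) / K(0) ). -/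
open MeasureTheory ProbabilityTheory Filter Topology

/-- Angle `θ_c = arccos(X̄_c(t₁) ⬝ X̄_c(t₂) / (‖X̄_c(t₁)‖ ‖X̄_c(t₂)‖))` when both norms
are nonzero, and `π/2` otherwise. -/
noncomputable def stackedAngle {Ω : Type*} (xc : ℕ → ℤ → Ω → ℝ) (d c : ℕ)
    (t₁ t₂ : ℤ) (ω : Ω) : ℝ :=
  if stackedNorm xc d c t₁ ω ≠ 0 ∧ stackedNorm xc d c t₂ ω ≠ 0 then
    Real.arccos
      (stackedDot xc d c t₁ t₂ ω / (stackedNorm xc d c t₁ ω * stackedNorm xc d c t₂ ω))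
  else Real.pi / 2

private lemma integrable_mul_of_memL2 {Ω : Type*} [MeasurableSpace Ω] {μ : Measure Ω}
    {f g : Ω → ℝ} (hf : MemLp f 2 μ) (hg : MemLp g 2 μ) :
    Integrable (fun ω => f ω * g ω) μ := by
  have h : MemLp (f • g) 1 μ := MemLp.smul hg hf
  rw [memLp_one_iff_integrable] at h
  exact h


/-- **Lemma 1, ReLU kernel convergence.** For a wide-sense stationary
mean-zero process `x` with covariance `K`, `K(0) > 0`, and i.i.d. channel copies
`xc k`, the normalized ReLU arc-cosine kernel
`(1/(cd)) (1/(2π)) ‖X̄_c(t₁)‖ ‖X̄_c(t₂)‖ (sin θ_c + (π − θ_c) cos θ_c)`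
converges almost surely to `(K(0)/(2π)) (sin θ + (π − θ) cos θ)` with
`θ = arccos(K(r)/K(0))`, `r = t₂ − t₁`. -/
theorem relu_kernel_tendsto_ae
    {Ω : Type*} [MeasurableSpace Ω] (μ : Measure Ω) [IsProbabilityMeasure μ]
    (x : ℤ → Ω → ℝ) (K : ℤ → ℝ)
    (hx_meas : ∀ t, Measurable (x t))
    (hL2 : ∀ t, MemLp (x t) 2 μ)
    (hmean : ∀ t, ∫ ω, x t ω ∂μ = 0)
    (hcov : ∀ t₁ t₂, ∫ ω, x t₁ ω * x t₂ ω ∂μ = K (t₁ - t₂))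
    (hK0 : 0 < K 0)
    (xc : ℕ → ℤ → Ω → ℝ)
    (hxc_meas : ∀ k t, Measurable (xc k t))
    (hxc_indep : iIndepFun (fun k ω (t : ℤ) => xc k t ω) μ)
    (hxc_copy : ∀ k, Measure.map (fun ω (t : ℤ) => xc k t ω) μ
      = Measure.map (fun ω (t : ℤ) => x t ω) μ)
    (d : ℕ) (hd : 1 ≤ d) (t₁ t₂ : ℤ) :
    ∀ᵐ ω ∂μ,
      Tendsto
        (fun c : ℕ =>
          (1 / ((c : ℝ) * d)) * (1 / (2 * Real.pi)) *
            stackedNorm xc d c t₁ ω * stackedNorm xc d c t₂ ω *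
            (Real.sin (stackedAngle xc d c t₁ t₂ ω) +
              (Real.pi - stackedAngle xc d c t₁ t₂ ω) *
                Real.cos (stackedAngle xc d c t₁ t₂ ω)))
        atTop
        (𝓝 ((K 0 / (2 * Real.pi)) *
          (Real.sin (Real.arccos (K (t₂ - t₁) / K 0)) +
            (Real.pi - Real.arccos (K (t₂ - t₁) / K 0)) *
              Real.cos (Real.arccos (K (t₂ - t₁) / K 0))))) := by
  classical
  have hd0 : (d : ℝ) ≠ 0 := Nat.cast_ne_zero.mpr (by omega)
  have hKsymm : K (t₁ - t₂) = K (t₂ - t₁) := by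
    rw [← hcov t₁ t₂, ← hcov t₂ t₁]
    simp_rw [mul_comm]
  -- Strong law for the normalized dot products
  have key : ∀ s s' : ℤ, ∀ᵐ ω ∂μ,
      Tendsto (fun c : ℕ => stackedDot xc d c s s' ω / ((c : ℝ) * d)) atTop
        (𝓝 (K (s - s'))) := by
    intro s s'
    set φ : (ℤ → ℝ) → ℝ := fun f => ∑ i ∈ Finset.range d, f (s - i) * f (s' - i) with hφdef
    have hφ : Measurable φ := by
      apply Finset.measurable_sum
      intro i _
      exact (measurable_pi_apply _).mul (measurable_pi_apply _)
    set g : ℕ → Ω → (ℤ → ℝ) := fun k ω t => xc k t ω with hgdef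
    have hg : ∀ k, Measurable (g k) := fun k => measurable_pi_lambda _ (fun t => hxc_meas k t)
    set gx : Ω → (ℤ → ℝ) := fun ω t => x t ω with hgxdef
    have hgx : Measurable gx := measurable_pi_lambda _ (fun t => hx_meas t)
    set Y : ℕ → Ω → ℝ := fun k => φ ∘ g k with hYdef
    have hident : ∀ k, IdentDistrib (Y k) (Y 0) μ μ := by
      intro k
      have h1 : IdentDistrib (g k) (g 0) μ μ :=
        ⟨(hg k).aemeasurable, (hg 0).aemeasurable, by
          simp only [hgdef]; rw [hxc_copy k, hxc_copy 0]⟩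
      exact h1.comp hφ
    have hindep : Pairwise (Function.onFun (IndepFun · · μ) Y) := by
      intro i j hij
      exact (hxc_indep.indepFun hij).comp hφ hφ
    have hYx : IdentDistrib (Y 0) (φ ∘ gx) μ μ :=
      IdentDistrib.comp ⟨(hg 0).aemeasurable, hgx.aemeasurable, hxc_copy 0⟩ hφ
    have hx_int : ∀ i : ℕ, Integrable (fun ω => x (s - i) ω * x (s' - i) ω) μ :=
      fun i => integrable_mul_of_memL2 (hL2 _) (hL2 _)
    have hint_x : Integrable (φ ∘ gx) μ := by
      have heq : (φ ∘ gx) = fun ω => ∑ i ∈ Finset.range d, x (s - i) ω * x (s' - i) ω := rfl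
      rw [heq]
      exact integrable_finset_sum _ (fun i _ => hx_int i)
    have hint : Integrable (Y 0) μ := hYx.integrable_iff.mpr hint_x
    have hmeanY : ∫ ω, Y 0 ω ∂μ = (d : ℝ) * K (s - s') := by
      rw [hYx.integral_eq]
      have heq : ∫ ω, (φ ∘ gx) ω ∂μ
          = ∑ i ∈ Finset.range d, ∫ ω, x (s - i) ω * x (s' - i) ω ∂μ := by
        exact integral_finset_sum _ (fun i _ => hx_int i)
      rw [heq]
      have hterm : ∀ i ∈ Finset.range d,
          ∫ ω, x (s - i) ω * x (s' - i) ω ∂μ = K (s - s') := by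
        intro i _
        rw [hcov]
        ring_nf
      rw [Finset.sum_congr rfl hterm, Finset.sum_const, Finset.card_range, nsmul_eq_mul]
    have hsl := strong_law_ae_real Y hint hindep hident
    filter_upwards [hsl] with ω hω
    have hω' := hω.div_const (d : ℝ)
    have hμY : μ[Y 0] = (d : ℝ) * K (s - s') := hmeanY
    rw [hμY] at hω'
    have hfun : (fun n : ℕ => stackedDot xc d n s s' ω / ((n : ℝ) * d))
        = fun n : ℕ => ((∑ i ∈ Finset.range n, Y i ω) / (n : ℝ)) / (d : ℝ) := by
      funext n
      rw [div_div]
      rfl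
    rw [hfun]
    rwa [mul_div_cancel_left₀ _ hd0] at hω'
  have hK1 := key t₁ t₁
  have hK2 := key t₂ t₂
  have hKr := key t₁ t₂
  filter_upwards [hK1, hK2, hKr] with ω hA hB hC
  rw [sub_self] at hA hB
  rw [hKsymm] at hC
  set A : ℕ → ℝ := fun c => stackedDot xc d c t₁ t₁ ω / ((c : ℝ) * d) with hAdef
  set B : ℕ → ℝ := fun c => stackedDot xc d c t₂ t₂ ω / ((c : ℝ) * d) with hBdef
  set C : ℕ → ℝ := fun c => stackedDot xc d c t₁ t₂ ω / ((c : ℝ) * d) with hCdef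
  set θL : ℝ := Real.arccos (K (t₂ - t₁) / K 0) with hθdef
  have hsA : Tendsto (fun c => Real.sqrt (A c)) atTop (𝓝 (Real.sqrt (K 0))) := hA.sqrt
  have hsB : Tendsto (fun c => Real.sqrt (B c)) atTop (𝓝 (Real.sqrt (K 0))) := hB.sqrt
  have hden : Tendsto (fun c => Real.sqrt (A c) * Real.sqrt (B c)) atTop (𝓝 (K 0)) := by
    have := hsA.mul hsB
    rwa [Real.mul_self_sqrt hK0.le] at this
  have hq : Tendsto (fun c => C c / (Real.sqrt (A c) * Real.sqrt (B c))) atTop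
      (𝓝 (K (t₂ - t₁) / K 0)) := hC.div hden (ne_of_gt hK0)
  have hθ : Tendsto (fun c => Real.arccos (C c / (Real.sqrt (A c) * Real.sqrt (B c)))) atTop
      (𝓝 θL) := (Real.continuous_arccos.tendsto _).comp hq
  have hF : Tendsto (fun c =>
      Real.sin (Real.arccos (C c / (Real.sqrt (A c) * Real.sqrt (B c)))) +
        (Real.pi - Real.arccos (C c / (Real.sqrt (A c) * Real.sqrt (B c)))) *
          Real.cos (Real.arccos (C c / (Real.sqrt (A c) * Real.sqrt (B c))))) atTop
      (𝓝 (Real.sin θL + (Real.pi - θL) * Real.cos θL)) :=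
    ((Real.continuous_sin.tendsto _).comp hθ).add
      ((tendsto_const_nhds.sub hθ).mul ((Real.continuous_cos.tendsto _).comp hθ))
  have hG : Tendsto (fun c =>
      (1 / (2 * Real.pi)) * Real.sqrt (A c) * Real.sqrt (B c) *
        (Real.sin (Real.arccos (C c / (Real.sqrt (A c) * Real.sqrt (B c)))) +
          (Real.pi - Real.arccos (C c / (Real.sqrt (A c) * Real.sqrt (B c)))) *
            Real.cos (Real.arccos (C c / (Real.sqrt (A c) * Real.sqrt (B c)))))) atTop
      (𝓝 ((1 / (2 * Real.pi)) * Real.sqrt (K 0) * Real.sqrt (K 0) *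
        (Real.sin θL + (Real.pi - θL) * Real.cos θL))) :=
    ((tendsto_const_nhds.mul hsA).mul hsB).mul hF
  have hconst : (1 / (2 * Real.pi)) * Real.sqrt (K 0) * Real.sqrt (K 0)
      = K 0 / (2 * Real.pi) := by
    rw [mul_assoc, Real.mul_self_sqrt hK0.le]
    ring
  rw [hconst] at hG
  refine hG.congr' ?_
  have h1 : ∀ᶠ c : ℕ in atTop, 0 < A c := hA.eventually (eventually_gt_nhds hK0)
  have h2 : ∀ᶠ c : ℕ in atTop, 0 < B c := hB.eventually (eventually_gt_nhds hK0)
  filter_upwards [h1, h2, eventually_ge_atTop 1] with c hAc hBc hc1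
  set n : ℝ := (c : ℝ) * d with hndef
  have hn : 0 < n := by
    have : (1 : ℝ) ≤ (c : ℝ) := by exact_mod_cast hc1
    have hd1 : (1 : ℝ) ≤ (d : ℝ) := by exact_mod_cast hd
    nlinarith
  have hdotA : stackedDot xc d c t₁ t₁ ω = n * A c := by
    rw [hAdef]
    field_simp
    rw [hndef]; ring
  have hdotB : stackedDot xc d c t₂ t₂ ω = n * B c := by
    rw [hBdef]
    field_simp
    rw [hndef]; ring
  have hdotC : stackedDot xc d c t₁ t₂ ω = n * C c := by
    rw [hCdef]
    field_simp
    rw [hndef]; ring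
  have hss : Real.sqrt n * Real.sqrt n = n := Real.mul_self_sqrt hn.le
  have hnorm1 : stackedNorm xc d c t₁ ω = Real.sqrt n * Real.sqrt (A c) := by
    rw [stackedNorm, hdotA, Real.sqrt_mul hn.le]
  have hnorm2 : stackedNorm xc d c t₂ ω = Real.sqrt n * Real.sqrt (B c) := by
    rw [stackedNorm, hdotB, Real.sqrt_mul hn.le]
  have hn1 : stackedNorm xc d c t₁ ω ≠ 0 := by
    rw [hnorm1]
    positivity
  have hn2 : stackedNorm xc d c t₂ ω ≠ 0 := by
    rw [hnorm2]
    positivity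
  have hangle : stackedAngle xc d c t₁ t₂ ω
      = Real.arccos (C c / (Real.sqrt (A c) * Real.sqrt (B c))) := by
    rw [stackedAngle, if_pos ⟨hn1, hn2⟩]
    congr 1
    rw [hnorm1, hnorm2, hdotC,
      show Real.sqrt n * Real.sqrt (A c) * (Real.sqrt n * Real.sqrt (B c))
        = n * (Real.sqrt (A c) * Real.sqrt (B c)) by rw [mul_mul_mul_comm, hss],
      mul_div_mul_left _ _ hn.ne']
  rw [hangle, hnorm1, hnorm2]
  have hcoef : 1 / ((c : ℝ) * d) * (1 / (2 * Real.pi)) * (Real.sqrt n * Real.sqrt (A c)) *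
      (Real.sqrt n * Real.sqrt (B c))
      = 1 / (2 * Real.pi) * Real.sqrt (A c) * Real.sqrt (B c) := by
    have h1 : (1 : ℝ) / ((c : ℝ) * d) = 1 / n := by rw [hndef]
    rw [h1, show 1 / n * (1 / (2 * Real.pi)) * (Real.sqrt n * Real.sqrt (A c)) *
        (Real.sqrt n * Real.sqrt (B c))
          = (Real.sqrt n * Real.sqrt n) * (1 / n) *
            (1 / (2 * Real.pi) * Real.sqrt (A c) * Real.sqrt (B c)) from by ring,
      hss, mul_one_div, div_self hn.ne', one_mul]
  rw [hcoef]
end
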